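/- Let F be a totally ordered field of characteristic 0 and (V, Π) an irreducible system of simple roots over F, with Π = {α₁,…,α_n}. Then the values S(α_i, α_i) for i = 1,…,n all have the same sign: either S(α_i, α_i) > 0 for all i, or S(α_i, α_i) < 0 for all i. -/

import Mathlib

/-- In an irreducible system of simple roots over a totally ordered field, the
values `S(αᵢ, αᵢ)` all have the same sign. -/
theorem stmt_15 {F : Type*} [Field F] [LinearOrder F] [IsStrictOrderedRing F]
    {V : Type*} [AddCommGroup V] [Module F V]
    (S : LinearMap.BilinForm F V) (hS : ∀ x y, S x y = S y x)
    {n : ℕ} (b : Module.Basis (Fin n) F V)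
    (hni : ∀ i, S (b i) (b i) ≠ 0)
    (hC : ∀ i j, i ≠ j → ∃ m : ℤ, m ≤ 0 ∧
      2 * S (b i) (b j) / S (b i) (b i) = (m : F))
    (hz : ∀ i j, S (b i) (b j) = 0 ↔ S (b j) (b i) = 0)
    (hirr : ∀ s : Set (Fin n), s.Nonempty →
      (∀ i ∈ s, ∀ j ∉ s, S (b i) (b j) = 0) → s = Set.univ) :
    (∀ i, 0 < S (b i) (b i)) ∨ (∀ i, S (b i) (b i) < 0) := by
  have key : ∀ i j, i ≠ j → S (b i) (b j) ≠ 0 →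
      0 < S (b i) (b i) * S (b j) (b j) := by
    intro i j hij hne
    obtain ⟨m, hm, heq⟩ := hC i j hij
    obtain ⟨m', hm', heq'⟩ := hC j i hij.symm
    have h1 : 2 * S (b i) (b j) = (m : F) * S (b i) (b i) :=
      (div_eq_iff (hni i)).mp heq
    rw [hS (b j) (b i)] at heq'
    have h2 : 2 * S (b i) (b j) = (m' : F) * S (b j) (b j) :=
      (div_eq_iff (hni j)).mp heq'
    have hm0 : (m : F) < 0 := by
      rcases lt_or_eq_of_le hm with h | h
      · exact_mod_cast h
      · exfalso; apply hne
        have hz0 : (m : F) = 0 := by exact_mod_cast h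
        rw [hz0, zero_mul] at h1
        linarith
    have hm0' : (m' : F) < 0 := by
      rcases lt_or_eq_of_le hm' with h | h
      · exact_mod_cast h
      · exfalso; apply hne
        have hz0 : (m' : F) = 0 := by exact_mod_cast h
        rw [hz0, zero_mul] at h2
        linarith
    have hi := hni i
    have hj := hni j
    have hsq : 0 < S (b i) (b j) ^ 2 := by positivity
    have h3 : ((m : F) * (m' : F)) * (S (b i) (b i) * S (b j) (b j)) =
        4 * S (b i) (b j) ^ 2 := by
      rw [show ((m : F) * (m' : F)) * (S (b i) (b i) * S (b j) (b j)) =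
          ((m : F) * S (b i) (b i)) * ((m' : F) * S (b j) (b j)) by ring,
        ← h1, ← h2]; ring
    nlinarith [h3, hsq, mul_pos (neg_pos.mpr hm0) (neg_pos.mpr hm0')]
  set s : Set (Fin n) := {i | 0 < S (b i) (b i)} with hs
  rcases Set.eq_empty_or_nonempty s with he | hne
  · right
    intro i
    have : ¬ 0 < S (b i) (b i) := by
      intro h
      exact Set.eq_empty_iff_forall_notMem.mp he i h
    exact lt_of_le_of_ne (not_lt.mp this) (hni i)
  · left
    have huniv : s = Set.univ := by
      apply hirr s hne
      intro i hi j hj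
      by_contra hne0
      have hij : i ≠ j := by rintro rfl; exact hj hi
      have := key i j hij hne0
      apply hj
      have hi' : 0 < S (b i) (b i) := hi
      rcases mul_pos_iff.mp this with ⟨_, h⟩ | ⟨h, _⟩
      · exact h
      · exact absurd hi' (not_lt.mpr h.le)
    intro i
    have : i ∈ s := huniv ▸ Set.mem_univ i
    exact this
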